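/- Let ν(x) = 1_{(0,∞)}(x) x^{k/2−1} e^{−x/2} / (2^{k/2} Γ(k/2)) be the χ² density with k > 0 degrees of freedom, and let ρ(x) = min{1, √x} for x > 0. Then the function x ↦ ρ(x)ν(x) (extended by 0 to R) satisfies: for every λ ∈ (0, min{k/2, 1}) there exists C > 0 with ∫_R |ρν(x+h) − ρν(x)| dx ≤ C|h|^λ for all h ∈ [−1,1]. -/

import Mathlib

open MeasureTheory Real Set

private lemma besov_hasDerivAt (p c t : ℝ) (ht : 0 < t) :
    HasDerivAt (fun x : ℝ => x ^ p * Real.exp (-x/2) / c)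
      ((p * t ^ (p-1) * Real.exp (-t/2) + t ^ p * (Real.exp (-t/2) * (-(1/2)))) / c) t := by
  have h1 : HasDerivAt (fun x : ℝ => x ^ p) (p * t ^ (p-1)) t :=
    Real.hasDerivAt_rpow_const (Or.inl ht.ne')
  have hinner : HasDerivAt (fun x : ℝ => -x/2) (-(1/2)) t := by
    have := ((hasDerivAt_id t).neg.div_const 2)
    norm_num at this
    convert this using 1
  have h2 : HasDerivAt (fun x : ℝ => Real.exp (-x/2)) (Real.exp (-t/2) * (-(1/2))) t :=
    hinner.exp
  exact (h1.mul h2).div_const c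

private lemma pow_le_exp_aux (n : ℕ) (x : ℝ) (hx : 0 ≤ x) :
    x ^ n ≤ (n.factorial : ℝ) * 4 ^ n * Real.exp (x/4) := by
  have h0 : (0:ℝ) ≤ x/4 := by linarith
  have h1 : (x/4)^n / (n.factorial : ℝ) ≤ Real.exp (x/4) := by
    calc (x/4)^n / (n.factorial : ℝ)
        ≤ ∑ i ∈ Finset.range (n+1), (x/4)^i / (i.factorial : ℝ) :=
          Finset.single_le_sum (f := fun i : ℕ => (x/4)^i / (i.factorial : ℝ))
            (fun i _ => by positivity) (Finset.self_mem_range_succ n)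
      _ ≤ Real.exp (x/4) := Real.sum_le_exp_of_nonneg h0 _
  have h2 : (x/4)^n = x^n / 4^n := div_pow x 4 n
  rw [h2, div_div] at h1
  have h4 : (0:ℝ) < 4^n * (n.factorial : ℝ) := by positivity
  calc x^n = (x^n / (4^n * (n.factorial:ℝ))) * (4^n * (n.factorial:ℝ)) := by field_simp
    _ ≤ Real.exp (x/4) * (4^n * (n.factorial:ℝ)) :=
        mul_le_mul_of_nonneg_right h1 h4.le
    _ = (n.factorial : ℝ) * 4^n * Real.exp (x/4) := by ring

set_option maxHeartbeats 2000000 in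
/-- Let `ν` be the χ² density with `k > 0` degrees of freedom and `ρ(x) = min{1,√x}`.
Then `x ↦ ρ(x)ν(x)` (extended by 0) satisfies, for every `λ ∈ (0, min{k/2, 1})`, a
Besov-type estimate `∫ |ρν(x+h) − ρν(x)| dx ≤ C |h|^λ` for `h ∈ [-1,1]`. -/
theorem chi_square_density_besov (k : ℝ) (hk : 0 < k)
    (ν f : ℝ → ℝ)
    (hν : ν = fun x => if 0 < x then
      x ^ (k/2 - 1) * Real.exp (-x/2) / (2 ^ (k/2) * Real.Gamma (k/2)) else 0)
    (hf : f = fun x => (min 1 (Real.sqrt x)) * ν x) :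
    ∀ lam ∈ Set.Ioo (0:ℝ) (min (k/2) 1), ∃ C : ℝ, 0 < C ∧
      ∀ h ∈ Set.Icc (-1:ℝ) 1,
        (∫ x : ℝ, |f (x + h) - f x|) ≤ C * |h| ^ lam := by
  intro lam hlam
  obtain ⟨hlam0, hlamlt⟩ := hlam
  have hlamk : lam < k/2 := hlamlt.trans_le (min_le_left _ _)
  have hlam1 : lam < 1 := hlamlt.trans_le (min_le_right _ _)
  have h1l : (0:ℝ) < 1 - lam := by linarith
  obtain ⟨c, hcdef⟩ : ∃ c : ℝ, c = 2 ^ (k/2) * Real.Gamma (k/2) := ⟨_, rfl⟩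
  have hc : 0 < c := by
    rw [hcdef]
    exact mul_pos (Real.rpow_pos_of_pos two_pos _) (Real.Gamma_pos_of_pos (by linarith))
  obtain ⟨q, hqdef⟩ : ∃ q : ℝ, q = (lam - 3)/2 := ⟨_, rfl⟩
  have hq : q < -1 := by rw [hqdef]; linarith
  have hq0 : q ≤ 0 := by linarith
  -- pointwise descriptions of f
  have hνx : ∀ x : ℝ, ν x = if 0 < x then x ^ (k/2 - 1) * Real.exp (-x/2) / c else 0 :=
    fun x => by rw [hν, ← hcdef]
  have hfx : ∀ x, f x = min 1 (Real.sqrt x) * ν x := fun x => by rw [hf]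
  have hν_nonneg : ∀ x, 0 ≤ ν x := by
    intro x; rw [hνx]; split_ifs with hx
    · positivity
    · exact le_refl 0
  have hmin_nonneg : ∀ x : ℝ, 0 ≤ min 1 (Real.sqrt x) :=
    fun x => le_min zero_le_one (Real.sqrt_nonneg x)
  have hf_nonneg : ∀ x, 0 ≤ f x := by
    intro x; rw [hfx]; exact mul_nonneg (hmin_nonneg x) (hν_nonneg x)
  have hf_le_ν : ∀ x, f x ≤ ν x := by
    intro x; rw [hfx]
    calc min 1 (Real.sqrt x) * ν x ≤ 1 * ν x :=
      mul_le_mul_of_nonneg_right (min_le_left _ _) (hν_nonneg x)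
    _ = ν x := one_mul _
  have hf0 : ∀ x : ℝ, x ≤ 0 → f x = 0 := by
    intro x hx; rw [hfx, hνx, if_neg (not_lt.2 hx), mul_zero]
  have hf1 : ∀ x : ℝ, 0 < x → x ≤ 1 → f x = x ^ (k/2 - 1/2) * Real.exp (-x/2) / c := by
    intro x hx hx1
    rw [hfx, hνx, if_pos hx]
    have hs : Real.sqrt x ≤ 1 := by
      rw [show (1:ℝ) = Real.sqrt 1 by simp]
      exact Real.sqrt_le_sqrt hx1
    rw [min_eq_right hs, Real.sqrt_eq_rpow]
    have hcomb : x ^ ((1:ℝ)/2) * x ^ (k/2 - 1) = x ^ (k/2 - 1/2) := by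
      rw [← Real.rpow_add hx]; congr 1; ring
    calc x ^ ((1:ℝ)/2) * (x ^ (k/2-1) * Real.exp (-x/2) / c)
        = (x ^ ((1:ℝ)/2) * x ^ (k/2-1)) * Real.exp (-x/2) / c := by ring
      _ = x ^ (k/2 - 1/2) * Real.exp (-x/2) / c := by rw [hcomb]
  have hf2 : ∀ x : ℝ, 1 ≤ x → f x = x ^ (k/2 - 1) * Real.exp (-x/2) / c := by
    intro x hx
    rw [hfx, hνx, if_pos (by linarith : (0:ℝ) < x)]
    have hs : 1 ≤ Real.sqrt x := by
      rw [show (1:ℝ) = Real.sqrt 1 by simp]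
      exact Real.sqrt_le_sqrt hx
    rw [min_eq_left hs, one_mul]
  have hfle : ∀ x : ℝ, 0 < x → f x ≤ x ^ (k/2 - 1/2) / c := by
    intro x hx
    rw [hfx, hνx, if_pos hx]
    have e1 : min 1 (Real.sqrt x) ≤ x ^ ((1:ℝ)/2) := by
      rw [← Real.sqrt_eq_rpow]; exact min_le_right _ _
    have e2 : Real.exp (-x/2) ≤ 1 := Real.exp_le_one_iff.2 (by linarith)
    have hp : (0:ℝ) < x ^ (k/2-1) := Real.rpow_pos_of_pos hx _
    have hcomb : x ^ ((1:ℝ)/2) * x ^ (k/2 - 1) = x ^ (k/2 - 1/2) := by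
      rw [← Real.rpow_add hx]; congr 1; ring
    calc min 1 (Real.sqrt x) * (x ^ (k/2-1) * Real.exp (-x/2) / c)
        ≤ x ^ ((1:ℝ)/2) * (x ^ (k/2-1) * 1 / c) := by
          apply mul_le_mul e1 _ (by positivity) (by positivity)
          exact (div_le_div_iff_of_pos_right hc).2 (mul_le_mul_of_nonneg_left e2 hp.le)
      _ = x ^ (k/2 - 1/2) / c := by rw [mul_one, ← hcomb]; ring
  -- measurability and integrability
  have hmeas : Measurable f := by
    have hm1 : Measurable fun x : ℝ => min 1 (Real.sqrt x) :=
      measurable_const.min Real.continuous_sqrt.measurable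
    have hm2 : Measurable fun x : ℝ => x ^ (k/2-1) := by measurability
    have hme : Measurable fun x : ℝ => Real.exp (-x/2) :=
      Real.continuous_exp.measurable.comp ((continuous_id.neg.div_const 2).measurable)
    have hm3 : Measurable fun x : ℝ => x ^ (k/2-1) * Real.exp (-x/2) / c :=
      (hm2.mul hme).div_const c
    have hm4 : Measurable ν := by
      rw [hν, ← hcdef]; exact Measurable.ite measurableSet_Ioi hm3 measurable_const
    rw [hf]
    exact hm1.mul hm4
  have hνint : Integrable ν := by
    have h1 : IntegrableOn (fun x : ℝ => x ^ (k/2-1) * Real.exp (-(1/2) * x ^ (1:ℝ))) (Ioi 0) :=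
      integrableOn_rpow_mul_exp_neg_mul_rpow (by linarith) zero_lt_one (by norm_num)
    have h2 : IntegrableOn (fun x : ℝ => x ^ (k/2-1) * Real.exp (-x/2) / c) (Ioi 0) :=
      IntegrableOn.congr_fun (h1.div_const c)
        (fun x _ => by rw [Real.rpow_one, show -(1/2:ℝ)*x = -x/2 from by ring])
        measurableSet_Ioi
    have h3 : ν = (Ioi (0:ℝ)).indicator (fun x => x ^ (k/2-1) * Real.exp (-x/2) / c) := by
      funext x
      rw [hνx x, Set.indicator_apply]
      simp [Set.mem_Ioi]
    rw [h3]
    exact h2.integrable_indicator measurableSet_Ioi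
  have hfint : Integrable f := by
    apply hνint.mono' hmeas.aestronglyMeasurable
    filter_upwards with x
    rw [Real.norm_eq_abs, abs_of_nonneg (hf_nonneg x)]
    exact hf_le_ν x
  -- constants
  obtain ⟨K, hKdef⟩ : ∃ K : ℝ, K = (|k/2 - 1/2| + 1/2)/c := ⟨_, rfl⟩
  have hK : 0 ≤ K := by rw [hKdef]; positivity
  obtain ⟨n, hndef⟩ : ∃ n : ℕ, n = ⌈|k/2 - 1|⌉₊ := ⟨_, rfl⟩
  obtain ⟨M, hMdef⟩ : ∃ M : ℝ, M = (|k/2 - 1| + 1/2)/c * ((n.factorial : ℝ) * 4 ^ n) := ⟨_, rfl⟩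
  have hM : 0 ≤ M := by rw [hMdef]; positivity
  -- mean value estimates
  have mvt1 : ∀ s t : ℝ, 0 < s → s ≤ t → t ≤ 1 → |f t - f s| ≤ K * s ^ q * (t - s) := by
    intro s t hs hst ht1
    have hqa : q ≤ k/2 - 1/2 - 1 := by rw [hqdef]; linarith
    have hqb : q ≤ k/2 - 1/2 := by linarith
    have hd : ∀ x ∈ Icc s t, HasDerivWithinAt f
        (((k/2-1/2) * x ^ (k/2-1/2-1) * Real.exp (-x/2)
          + x ^ (k/2-1/2) * (Real.exp (-x/2) * (-(1/2)))) / c) (Icc s t) x := by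
      intro x hx
      have hx0 : 0 < x := lt_of_lt_of_le hs hx.1
      exact ((besov_hasDerivAt (k/2-1/2) c x hx0).hasDerivWithinAt).congr
        (fun y hy => hf1 y (lt_of_lt_of_le hs hy.1) (le_trans hy.2 ht1))
        (hf1 x hx0 (le_trans hx.2 ht1))
    have hb : ∀ x ∈ Icc s t, ‖((k/2-1/2) * x ^ (k/2-1/2-1) * Real.exp (-x/2)
          + x ^ (k/2-1/2) * (Real.exp (-x/2) * (-(1/2)))) / c‖ ≤ K * s ^ q := by
      intro x hx
      have hx0 : 0 < x := lt_of_lt_of_le hs hx.1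
      have hx1 : x ≤ 1 := le_trans hx.2 ht1
      have hE0 : 0 < Real.exp (-x/2) := Real.exp_pos _
      have hE1 : Real.exp (-x/2) ≤ 1 := Real.exp_le_one_iff.2 (by linarith)
      have hp1 : 0 < x ^ (k/2-1/2-1) := Real.rpow_pos_of_pos hx0 _
      have hp2 : 0 < x ^ (k/2-1/2) := Real.rpow_pos_of_pos hx0 _
      have hq1 : x ^ (k/2-1/2-1) ≤ s ^ q :=
        le_trans (Real.rpow_le_rpow_of_exponent_ge hx0 hx1 hqa)
          (Real.rpow_le_rpow_of_nonpos hs hx.1 (by linarith))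
      have hq2 : x ^ (k/2-1/2) ≤ s ^ q :=
        le_trans (Real.rpow_le_rpow_of_exponent_ge hx0 hx1 hqb)
          (Real.rpow_le_rpow_of_nonpos hs hx.1 (by linarith))
      have hsq : 0 < s ^ q := Real.rpow_pos_of_pos hs _
      rw [Real.norm_eq_abs, abs_div, abs_of_pos hc]
      have t1 : |(k/2-1/2) * x ^ (k/2-1/2-1) * Real.exp (-x/2)| ≤ |k/2-1/2| * s ^ q := by
        rw [abs_mul, abs_mul, abs_of_pos hp1, abs_of_pos hE0]
        calc |k/2-1/2| * x ^ (k/2-1/2-1) * Real.exp (-x/2)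
            ≤ |k/2-1/2| * s ^ q * 1 := by
              apply mul_le_mul (mul_le_mul_of_nonneg_left hq1 (abs_nonneg _)) hE1 hE0.le
              positivity
          _ = |k/2-1/2| * s ^ q := mul_one _
      have t2 : |x ^ (k/2-1/2) * (Real.exp (-x/2) * (-(1/2)))| ≤ s ^ q * (1/2) := by
        rw [abs_mul, abs_of_pos hp2, abs_mul, abs_of_pos hE0, abs_neg,
          abs_of_pos (by norm_num : (0:ℝ) < 1/2)]
        calc x ^ (k/2-1/2) * (Real.exp (-x/2) * (1/2))
            ≤ s ^ q * (1 * (1/2)) := by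
              apply mul_le_mul hq2 _ (by positivity) hsq.le
              exact mul_le_mul_of_nonneg_right hE1 (by norm_num)
          _ = s ^ q * (1/2) := by ring
      have habs := (abs_add_le _ _).trans (add_le_add t1 t2)
      have hKeq : K * s ^ q = (|k/2-1/2| * s ^ q + s ^ q * (1/2))/c := by rw [hKdef]; ring
      rw [hKeq]
      exact (div_le_div_iff_of_pos_right hc).2 habs
    have hkey := Convex.norm_image_sub_le_of_norm_hasDerivWithin_le hd hb (convex_Icc s t)
      (left_mem_Icc.2 hst) (right_mem_Icc.2 hst)
    rw [Real.norm_eq_abs, Real.norm_eq_abs, abs_of_nonneg (sub_nonneg.2 hst)] at hkey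
    exact hkey
  have mvt2 : ∀ s t : ℝ, 1 ≤ s → s ≤ t →
      |f t - f s| ≤ M * Real.exp (-s/4) * (t - s) := by
    intro s t hs hst
    have hbn : |k/2 - 1| ≤ (n:ℝ) := by rw [hndef]; exact Nat.le_ceil _
    have hd : ∀ x ∈ Icc s t, HasDerivWithinAt f
        (((k/2-1) * x ^ (k/2-1-1) * Real.exp (-x/2)
          + x ^ (k/2-1) * (Real.exp (-x/2) * (-(1/2)))) / c) (Icc s t) x := by
      intro x hx
      have hx1 : 1 ≤ x := le_trans hs hx.1
      have hx0 : (0:ℝ) < x := lt_of_lt_of_le one_pos hx1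
      exact ((besov_hasDerivAt (k/2-1) c x hx0).hasDerivWithinAt).congr
        (fun y hy => hf2 y (le_trans hs hy.1)) (hf2 x hx1)
    have hb : ∀ x ∈ Icc s t, ‖((k/2-1) * x ^ (k/2-1-1) * Real.exp (-x/2)
          + x ^ (k/2-1) * (Real.exp (-x/2) * (-(1/2)))) / c‖ ≤ M * Real.exp (-s/4) := by
      intro x hx
      have hx1 : 1 ≤ x := le_trans hs hx.1
      have hx0 : (0:ℝ) < x := lt_of_lt_of_le one_pos hx1
      have hE0 : 0 < Real.exp (-x/2) := Real.exp_pos _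
      have hp1 : 0 < x ^ (k/2-1-1) := Real.rpow_pos_of_pos hx0 _
      have hp2 : 0 < x ^ (k/2-1) := Real.rpow_pos_of_pos hx0 _
      have hpow : x ^ ((n:ℝ)) = x ^ n := Real.rpow_natCast x n
      have hb1 : x ^ (k/2-1-1) ≤ x ^ n := by
        rw [← hpow]
        exact Real.rpow_le_rpow_of_exponent_le hx1
          (by linarith [le_abs_self (k/2-1)])
      have hb2 : x ^ (k/2-1) ≤ x ^ n := by
        rw [← hpow]
        exact Real.rpow_le_rpow_of_exponent_le hx1
          (by linarith [le_abs_self (k/2-1)])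
      have hxn : x ^ n * Real.exp (-x/2)
          ≤ (n.factorial:ℝ) * 4^n * Real.exp (-s/4) := by
        have h1 := pow_le_exp_aux n x hx0.le
        have h2 : x ^ n * Real.exp (-x/2)
            ≤ ((n.factorial:ℝ) * 4^n * Real.exp (x/4)) * Real.exp (-x/2) :=
          mul_le_mul_of_nonneg_right h1 hE0.le
        have h3 : Real.exp (x/4) * Real.exp (-x/2) = Real.exp (-x/4) := by
          rw [← Real.exp_add]; congr 1; ring
        have h4 : Real.exp (-x/4) ≤ Real.exp (-s/4) :=
          Real.exp_le_exp.2 (by linarith [hx.1])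
        calc x ^ n * Real.exp (-x/2)
            ≤ (n.factorial:ℝ) * 4^n * Real.exp (x/4) * Real.exp (-x/2) := h2
          _ = (n.factorial:ℝ) * 4^n * (Real.exp (x/4) * Real.exp (-x/2)) := by ring
          _ = (n.factorial:ℝ) * 4^n * Real.exp (-x/4) := by rw [h3]
          _ ≤ (n.factorial:ℝ) * 4^n * Real.exp (-s/4) :=
              mul_le_mul_of_nonneg_left h4 (by positivity)
      rw [Real.norm_eq_abs, abs_div, abs_of_pos hc]
      have t1 : |(k/2-1) * x ^ (k/2-1-1) * Real.exp (-x/2)|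
          ≤ |k/2-1| * (x ^ n * Real.exp (-x/2)) := by
        rw [abs_mul, abs_mul, abs_of_pos hp1, abs_of_pos hE0]
        calc |k/2-1| * x ^ (k/2-1-1) * Real.exp (-x/2)
            = |k/2-1| * (x ^ (k/2-1-1) * Real.exp (-x/2)) := by ring
          _ ≤ |k/2-1| * (x ^ n * Real.exp (-x/2)) :=
            mul_le_mul_of_nonneg_left
              (mul_le_mul_of_nonneg_right hb1 hE0.le) (abs_nonneg _)
      have t2 : |x ^ (k/2-1) * (Real.exp (-x/2) * (-(1/2)))|
          ≤ (1/2) * (x ^ n * Real.exp (-x/2)) := by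
        rw [abs_mul, abs_of_pos hp2, abs_mul, abs_of_pos hE0, abs_neg,
          abs_of_pos (by norm_num : (0:ℝ) < 1/2)]
        calc x ^ (k/2-1) * (Real.exp (-x/2) * (1/2))
            = (1/2) * (x ^ (k/2-1) * Real.exp (-x/2)) := by ring
          _ ≤ (1/2) * (x ^ n * Real.exp (-x/2)) :=
            mul_le_mul_of_nonneg_left
              (mul_le_mul_of_nonneg_right hb2 hE0.le) (by norm_num)
      have habs := (abs_add_le _ _).trans (add_le_add t1 t2)
      have h5 : |k/2-1| * (x ^ n * Real.exp (-x/2)) + (1/2) * (x ^ n * Real.exp (-x/2))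
          = (|k/2-1| + 1/2) * (x ^ n * Real.exp (-x/2)) := by ring
      have h6 : (|k/2-1| + 1/2) * (x ^ n * Real.exp (-x/2))
          ≤ (|k/2-1| + 1/2) * ((n.factorial:ℝ) * 4^n * Real.exp (-s/4)) :=
        mul_le_mul_of_nonneg_left hxn (by positivity)
      have hMeq : M * Real.exp (-s/4)
          = ((|k/2-1| + 1/2) * ((n.factorial:ℝ) * 4^n * Real.exp (-s/4)))/c := by
        rw [hMdef]; ring
      rw [hMeq]
      apply (div_le_div_iff_of_pos_right hc).2
      calc |(k/2-1) * x ^ (k/2-1-1) * Real.exp (-x/2)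
            + x ^ (k/2-1) * (Real.exp (-x/2) * (-(1/2)))|
          ≤ |k/2-1| * (x ^ n * Real.exp (-x/2)) + (1/2) * (x ^ n * Real.exp (-x/2)) := habs
        _ = (|k/2-1| + 1/2) * (x ^ n * Real.exp (-x/2)) := h5
        _ ≤ (|k/2-1| + 1/2) * ((n.factorial:ℝ) * 4^n * Real.exp (-s/4)) := h6
    have hkey := Convex.norm_image_sub_le_of_norm_hasDerivWithin_le hd hb (convex_Icc s t)
      (left_mem_Icc.2 hst) (right_mem_Icc.2 hst)
    rw [Real.norm_eq_abs, Real.norm_eq_abs, abs_of_nonneg (sub_nonneg.2 hst)] at hkey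
    exact hkey
  -- pointwise key estimate
  have key : ∀ x : ℝ, 0 < x → ∀ h' : ℝ, 0 < h' →
      |f (x + h') - f x| ≤ (K * x ^ q + M * Real.exp (-x/4)) * h' := by
    intro x hx h' hh'
    have hxq : (0:ℝ) < x ^ q := Real.rpow_pos_of_pos hx _
    have hKx : 0 ≤ K * x ^ q := mul_nonneg hK hxq.le
    have hMe : 0 ≤ M * Real.exp (-x/4) := mul_nonneg hM (Real.exp_pos _).le
    by_cases hcase1 : x + h' ≤ 1
    · have h := mvt1 x (x+h') hx (by linarith) hcase1
      rw [add_sub_cancel_left] at h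
      nlinarith [mul_nonneg hMe hh'.le]
    · by_cases hcase2 : 1 ≤ x
      · have h := mvt2 x (x+h') hcase2 (by linarith)
        rw [add_sub_cancel_left] at h
        nlinarith [mul_nonneg hKx hh'.le]
      · push_neg at hcase1 hcase2
        have hA := mvt1 x 1 hx hcase2.le le_rfl
        have hB := mvt2 1 (x+h') le_rfl (by linarith)
        have htri : |f (x+h') - f x| ≤ |f (x+h') - f 1| + |f 1 - f x| := abs_sub_le _ _ _
        have hexp : Real.exp (-1/4) ≤ Real.exp (-x/4) := Real.exp_le_exp.2 (by linarith)
        have e1 : M * Real.exp (-1/4) * (x + h' - 1) ≤ M * Real.exp (-x/4) * (x+h'-1) :=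
          mul_le_mul_of_nonneg_right (mul_le_mul_of_nonneg_left hexp hM) (by linarith)
        have e3 : K * x^q * (1-x) ≤ K * x^q * h' := mul_le_mul_of_nonneg_left (by linarith) hKx
        have e4 : M * Real.exp (-x/4) * (x+h'-1) ≤ M * Real.exp (-x/4) * h' :=
          mul_le_mul_of_nonneg_left (by linarith) hMe
        calc |f (x+h') - f x| ≤ |f (x+h') - f 1| + |f 1 - f x| := htri
          _ ≤ M * Real.exp (-1/4) * (x + h' - 1) + K * x^q * (1-x) := add_le_add hB hA
          _ ≤ M * Real.exp (-x/4) * (x+h'-1) + K * x^q * (1-x) := by linarith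
          _ ≤ M * Real.exp (-x/4) * h' + K * x^q * h' := by linarith
          _ = (K * x ^ q + M * Real.exp (-x/4)) * h' := by ring
  -- the constant
  obtain ⟨C, hCdef⟩ : ∃ C : ℝ,
      C = 2 * 2 ^ (k/2 + 1/2) / ((k/2 + 1/2) * c) + K * (2/(1 - lam)) + 4 * M + 1 := ⟨_, rfl⟩
  have c1 : (0:ℝ) ≤ 2 * 2 ^ (k/2 + 1/2) / ((k/2 + 1/2) * c) := by positivity
  have c2 : (0:ℝ) ≤ K * (2/(1 - lam)) := by
    apply mul_nonneg hK
    positivity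
  have hCpos : 0 < C := by rw [hCdef]; nlinarith [hM]
  -- main estimate for positive shifts
  have hmain : ∀ h' : ℝ, 0 < h' → h' ≤ 1 →
      (∫ x : ℝ, |f (x + h') - f x|) ≤ C * h' ^ lam := by
    intro h' h0 h1
    have hft : Integrable (fun x => f (x + h')) := hfint.comp_add_right h'
    have hDint : Integrable (fun x => |f (x + h') - f x|) := (hft.sub hfint).abs
    have hzero : ∀ x ∉ Ioi (-h'), |f (x + h') - f x| = 0 := by
      intro x hx
      simp only [mem_Ioi, not_lt] at hx
      rw [hf0 (x + h') (by linarith), hf0 x (by linarith), sub_zero, abs_zero]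
    have hsplit : (∫ x : ℝ, |f (x + h') - f x|)
        = (∫ x in Ioc (-h') h', |f (x + h') - f x|)
          + ∫ x in Ioi h', |f (x + h') - f x| := by
      rw [← setIntegral_eq_integral_of_forall_compl_eq_zero hzero,
        ← Set.Ioc_union_Ioi_eq_Ioi (by linarith : -h' ≤ h'),
        setIntegral_union (Set.Ioc_disjoint_Ioi le_rfl) measurableSet_Ioi
          hDint.integrableOn hDint.integrableOn]
    -- region near zero
    have hI2a : (∫ x in Ioc (-h') h', |f (x + h') - f x|)
        ≤ ∫ x in Ioc (-h') h', (f (x + h') + f x) := by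
      apply setIntegral_mono_on hDint.integrableOn (hft.add hfint).integrableOn
        measurableSet_Ioc
      intro x _
      calc |f (x + h') - f x| ≤ |f (x + h')| + |f x| := by
            rw [sub_eq_add_neg]
            exact (abs_add_le _ _).trans (by rw [abs_neg])
        _ = f (x + h') + f x := by
            rw [abs_of_nonneg (hf_nonneg _), abs_of_nonneg (hf_nonneg _)]
    have hI2b : (∫ x in Ioc (-h') h', (f (x + h') + f x))
        = (∫ x in Ioc (-h') h', f (x + h')) + ∫ x in Ioc (-h') h', f x :=
      MeasureTheory.integral_add hft.integrableOn hfint.integrableOn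
    have hT : (∫ x in Ioc (-h') h', f (x + h')) = ∫ x in Ioc 0 (2*h') , f x := by
      rw [← intervalIntegral.integral_of_le (by linarith : -h' ≤ h'),
        intervalIntegral.integral_comp_add_right f h',
        show -h' + h' = (0:ℝ) by ring, show h' + h' = 2*h' by ring,
        intervalIntegral.integral_of_le (by linarith : (0:ℝ) ≤ 2*h')]
    have hP : (∫ x in Ioc (-h') h', f x) ≤ ∫ x in Ioc 0 (2*h'), f x := by
      have hdisj2 : Disjoint (Ioc (-h') (0:ℝ)) (Ioc (0:ℝ) h') := by
        rw [Set.disjoint_left]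
        intro x hx1 hx2
        exact absurd hx1.2 (not_le.2 hx2.1)
      rw [← Set.Ioc_union_Ioc_eq_Ioc (by linarith : -h' ≤ (0:ℝ)) (by linarith : (0:ℝ) ≤ h'),
        setIntegral_union hdisj2 measurableSet_Ioc hfint.integrableOn hfint.integrableOn,
        setIntegral_eq_zero_of_forall_eq_zero (fun x hx => hf0 x hx.2), zero_add]
      exact setIntegral_mono_set hfint.integrableOn
        (Filter.Eventually.of_forall fun x => hf_nonneg x)
        ((Set.Ioc_subset_Ioc_right (by linarith)).eventuallyLE)
    have hS : (∫ x in Ioc 0 (2*h'), f x)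
        ≤ 2 ^ (k/2+1/2) * h' ^ (k/2+1/2) / ((k/2+1/2) * c) := by
      have hii : IntervalIntegrable (fun x : ℝ => x ^ (k/2-1/2) / c) volume 0 (2*h') :=
        (intervalIntegral.intervalIntegrable_rpow' (by linarith : (-1:ℝ) < k/2-1/2)).div_const c
      have hint : IntegrableOn (fun x : ℝ => x ^ (k/2-1/2) / c) (Ioc 0 (2*h')) :=
        (intervalIntegrable_iff_integrableOn_Ioc_of_le (by linarith : (0:ℝ) ≤ 2*h')).1 hii
      have hle := setIntegral_mono_on hfint.integrableOn hint measurableSet_Ioc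
        (fun x hx => hfle x hx.1)
      refine hle.trans ?_
      rw [MeasureTheory.integral_div,
        ← intervalIntegral.integral_of_le (by linarith : (0:ℝ) ≤ 2*h'),
        _root_.integral_rpow (Or.inl (by linarith : (-1:ℝ) < k/2-1/2)),
        show k/2-1/2+1 = k/2+1/2 by ring,
        Real.zero_rpow (by positivity : (k/2+1/2:ℝ) ≠ 0), sub_zero,
        Real.mul_rpow (by norm_num : (0:ℝ) ≤ 2) h0.le]
      rw [div_div]
    -- tail region
    have int1 : IntegrableOn (fun x : ℝ => K * x ^ q) (Ioi h') :=
      (integrableOn_Ioi_rpow_of_lt hq h0).const_mul K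
    have int2 : IntegrableOn (fun x : ℝ => M * Real.exp (-x/4)) (Ioi h') := by
      have hbase := exp_neg_integrableOn_Ioi h' (by norm_num : (0:ℝ) < 1/4)
      have heq : IntegrableOn (fun x : ℝ => Real.exp (-x/4)) (Ioi h') :=
        hbase.congr_fun (fun x _ => by dsimp only; rw [show -(1/4:ℝ)*x = -x/4 from by ring])
          measurableSet_Ioi
      exact heq.const_mul M
    have hI3 : (∫ x in Ioi h', |f (x + h') - f x|)
        ≤ ∫ x in Ioi h', (K * x ^ q + M * Real.exp (-x/4)) * h' := by
      apply setIntegral_mono_on hDint.integrableOn ((int1.add int2).mul_const h')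
        measurableSet_Ioi
      intro x hx
      exact key x (lt_trans h0 hx) h' h0
    have hI3v : (∫ x in Ioi h', (K * x ^ q + M * Real.exp (-x/4)) * h')
        ≤ (K * (2/(1-lam)) * h' ^ (q+1) + 4*M) * h' := by
      rw [MeasureTheory.integral_mul_const]
      apply mul_le_mul_of_nonneg_right _ h0.le
      rw [MeasureTheory.integral_add int1 int2, MeasureTheory.integral_const_mul,
        MeasureTheory.integral_const_mul]
      have v1 : (∫ x in Ioi h', x ^ q) = -h' ^ (q+1)/(q+1) := integral_Ioi_rpow_of_lt hq h0
      have v2 : (∫ x in Ioi h', Real.exp (-x/4)) ≤ 4 := by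
        have heq2 : (fun x : ℝ => Real.exp (-x/4)) = (fun x : ℝ => Real.exp (-(1/4*x))) := by
          funext x; congr 1; ring
        rw [heq2]
        have hcomp : (∫ x in Ioi h', Real.exp (-(1/4*x)))
            = ((1/4 : ℝ))⁻¹ • ∫ x in Ioi ((1/4:ℝ)*h'), Real.exp (-x) :=
          integral_comp_mul_left_Ioi (fun y => Real.exp (-y)) h' (by norm_num)
        rw [hcomp, integral_exp_neg_Ioi, smul_eq_mul,
          show ((1:ℝ)/4)⁻¹ = 4 from by norm_num]
        have hee : Real.exp (-(1/4*h')) ≤ 1 := Real.exp_le_one_iff.2 (by linarith)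
        linarith
      have veq : -h' ^ (q+1)/(q+1) = (2/(1-lam)) * h' ^ (q+1) := by
        have hne : (1:ℝ) - lam ≠ 0 := by linarith
        have hexp : q + 1 = (lam-1)/2 := by rw [hqdef]; ring
        rw [hexp, div_eq_iff (show ((lam-1)/2 : ℝ) ≠ 0 from (by linarith : ((lam-1)/2:ℝ) < 0).ne)]
        field_simp
        ring
      rw [v1, veq]
      have := mul_le_mul_of_nonneg_left v2 hM
      linarith
    -- exponent comparisons
    have pa : h' ^ (k/2+1/2) ≤ h' ^ lam :=
      Real.rpow_le_rpow_of_exponent_ge h0 h1 (by linarith)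
    have pq : h' ^ (q+1) * h' ≤ h' ^ lam := by
      rw [← Real.rpow_add_one (ne_of_gt h0)]
      exact Real.rpow_le_rpow_of_exponent_ge h0 h1 (by rw [hqdef]; linarith)
    have ph : h' ≤ h' ^ lam := by
      nth_rewrite 1 [← Real.rpow_one h']
      exact Real.rpow_le_rpow_of_exponent_ge h0 h1 hlam1.le
    have hplam : 0 < h' ^ lam := Real.rpow_pos_of_pos h0 _
    -- assemble
    have hI2 : (∫ x in Ioc (-h') h', |f (x + h') - f x|)
        ≤ 2 * (2 ^ (k/2+1/2) * h' ^ (k/2+1/2) / ((k/2+1/2) * c)) := by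
      have := hI2a.trans_eq hI2b
      rw [hT] at this
      linarith [hP, hS]
    have final1 : 2 * (2 ^ (k/2+1/2) * h' ^ (k/2+1/2) / ((k/2+1/2) * c))
        ≤ (2 * 2 ^ (k/2+1/2) / ((k/2+1/2) * c)) * h' ^ lam := by
      rw [show 2 * (2 ^ (k/2+1/2) * h' ^ (k/2+1/2) / ((k/2+1/2) * c))
          = (2 * 2 ^ (k/2+1/2) / ((k/2+1/2) * c)) * h' ^ (k/2+1/2) from by ring]
      exact mul_le_mul_of_nonneg_left pa c1
    have final2 : (K * (2/(1-lam)) * h' ^ (q+1) + 4*M) * h'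
        ≤ (K * (2/(1-lam)) + 4*M) * h' ^ lam := by
      rw [show (K * (2/(1-lam)) * h' ^ (q+1) + 4*M) * h'
          = K * (2/(1-lam)) * (h' ^ (q+1) * h') + 4*M*h' from by ring]
      calc K * (2/(1-lam)) * (h' ^ (q+1) * h') + 4*M*h'
          ≤ K * (2/(1-lam)) * h' ^ lam + 4*M*h' ^ lam :=
            add_le_add (mul_le_mul_of_nonneg_left pq c2)
              (mul_le_mul_of_nonneg_left ph (by positivity))
        _ = (K * (2/(1-lam)) + 4*M) * h' ^ lam := by ring
    calc (∫ x : ℝ, |f (x + h') - f x|)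
        = (∫ x in Ioc (-h') h', |f (x + h') - f x|)
          + ∫ x in Ioi h', |f (x + h') - f x| := hsplit
      _ ≤ 2 * (2 ^ (k/2+1/2) * h' ^ (k/2+1/2) / ((k/2+1/2) * c))
          + (K * (2/(1-lam)) * h' ^ (q+1) + 4*M) * h' :=
          add_le_add hI2 (hI3.trans hI3v)
      _ ≤ (2 * 2 ^ (k/2+1/2) / ((k/2+1/2) * c)) * h' ^ lam
          + (K * (2/(1-lam)) + 4*M) * h' ^ lam := add_le_add final1 final2
      _ = (2 * 2 ^ (k/2+1/2) / ((k/2+1/2) * c) + K * (2/(1-lam)) + 4*M) * h' ^ lam := by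
          ring
      _ ≤ C * h' ^ lam := by
          apply mul_le_mul_of_nonneg_right _ hplam.le
          rw [hCdef]
          linarith
  refine ⟨C, hCpos, ?_⟩
  intro h hh
  rcases lt_trichotomy h 0 with hneg | hzero | hpos
  · have hu : 0 < -h := by linarith
    have hu1 : -h ≤ 1 := by linarith [hh.1]
    have hsub : (∫ x : ℝ, |f (x + h) - f x|) = ∫ x : ℝ, |f (x + -h) - f x| := by
      have hshift := MeasureTheory.integral_add_right_eq_self
        (μ := volume) (fun y => |f y - f (y + -h)|) h
      calc (∫ x : ℝ, |f (x + h) - f x|)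
          = ∫ x : ℝ, |f (x + h) - f ((x + h) + -h)| := by
            congr 1; funext x; congr 2; ring
        _ = ∫ y : ℝ, |f y - f (y + -h)| := hshift
        _ = ∫ y : ℝ, |f (y + -h) - f y| := by
            congr 1; funext y; rw [abs_sub_comm]
    rw [hsub, abs_of_neg hneg]
    exact hmain (-h) hu hu1
  · subst hzero
    simp [Real.zero_rpow hlam0.ne']
  · rw [abs_of_pos hpos]
    exact hmain h hpos hh.2
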